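/- Frobenius norm identity from the TQt-SVD: if A = U ⋆_QT D ⋆_QT V^H with transforms T_n = c_n U_n satisfying ∏_{n=3}^{L} |c_n| = 1, then ‖A‖_F² = Σ_{k=1}^{min(N1,N2)} σ_k², where σ_k = ‖D(k,k,:,…,:)‖_F are the singular values of the quaternion tensor A. -/

import Mathlib

open scoped Quaternion
open Matrix

noncomputable section

/-- An `L`th-order quaternion tensor, modeled as a family of frontal-slice
quaternion matrices indexed by the multi-index `ν = (n₃,…,n_L) : ι`. -/
abbrev QT (ι : Type*) (m n : ℕ) := ι → Matrix (Fin m) (Fin n) ℍ[ℝ]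

variable {ι : Type*} [Fintype ι] [DecidableEq ι]

/-- The hat transform `Â = A ×₃ T₃ ⋯ ×_L T_L`, with `T` the combined invertible
quaternion transform acting on the tube fibers. -/
def hatT (T : Matrix ι ι ℍ[ℝ]) {m n : ℕ} (A : QT ι m n) : QT ι m n :=
  fun ν i j => ∑ μ, T ν μ * A μ i j

/-- The facewise product `⋆_QF`: slice-wise quaternion matrix product. -/
def qf {m p n : ℕ} (A : QT ι m p) (B : QT ι p n) : QT ι m n :=
  fun ν => A ν * B ν

/-- The `⋆_QT` product; `T` is the combined transform and `S` its inverse. -/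
def qt (T S : Matrix ι ι ℍ[ℝ]) {m p n : ℕ} (A : QT ι m p) (B : QT ι p n) : QT ι m n :=
  hatT S (qf (hatT T A) (hatT T B))

/-- The identity quaternion tensor: every transform-domain slice is `I_P`. -/
def qtId (S : Matrix ι ι ℍ[ℝ]) (p : ℕ) : QT ι p p := hatT S (fun _ => 1)

/-- Conjugate transpose, defined slice-wise in the transform domain. -/
def qtH (T S : Matrix ι ι ℍ[ℝ]) {m n : ℕ} (A : QT ι m n) : QT ι n m :=
  hatT S (fun ν => (hatT T A ν)ᴴ)

/-- A quaternion matrix is unitary. -/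
def qUnitaryM {p : Type*} [Fintype p] [DecidableEq p] (Q : Matrix p p ℍ[ℝ]) : Prop :=
  Qᴴ * Q = 1 ∧ Q * Qᴴ = 1

/-- A quaternion tensor is unitary for the `⋆_QT` product. -/
def qtUnitary (T S : Matrix ι ι ℍ[ℝ]) {p : ℕ} (U : QT ι p p) : Prop :=
  qt T S (qtH T S U) U = qtId S p ∧ qt T S U (qtH T S U) = qtId S p

/-- Frobenius norm of a quaternion tensor. -/
def frob {m n : ℕ} (A : QT ι m n) : ℝ :=
  Real.sqrt (∑ ν, ∑ i, ∑ j, ‖A ν i j‖ ^ 2)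

/-- Frobenius norm of a quaternion matrix. -/
def frobM {m n : ℕ} (M : Matrix (Fin m) (Fin n) ℍ[ℝ]) : ℝ :=
  Real.sqrt (∑ i, ∑ j, ‖M i j‖ ^ 2)

/-- The `k`-th diagonal tube `D(k,k,:,…,:)` of a quaternion tensor. -/
def diagTube {m n : ℕ} (D : QT ι m n) (k : ℕ) : ι → ℍ[ℝ] :=
  fun ν => if h : k < m ∧ k < n then D ν ⟨k, h.1⟩ ⟨k, h.2⟩ else 0

/-- Frobenius norm of the `k`-th diagonal tube. -/
def tubeNorm {m n : ℕ} (D : QT ι m n) (k : ℕ) : ℝ :=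
  Real.sqrt (∑ ν, ‖diagTube D k ν‖ ^ 2)

/-- The TQt-rank: the number of nonzero diagonal tubes of the f-diagonal factor. -/
def tqtRank {m n : ℕ} (D : QT ι m n) : ℕ :=
  ((Finset.range (min m n)).filter (fun k => 0 < tubeNorm D k)).card

/-- Rank of a quaternion matrix: dimension of the span of its columns as a
right `ℍ`-module (i.e. a module over `ℍᵐᵒᵖ`). -/
def qrank {m n : ℕ} (M : Matrix (Fin m) (Fin n) ℍ[ℝ]) : ℕ :=
  Module.finrank ℍ[ℝ]ᵐᵒᵖ
    (Submodule.span ℍ[ℝ]ᵐᵒᵖ (Set.range fun j : Fin n => fun i : Fin m => M i j))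

/-- Real diagonal quaternion matrix with diagonal entries `σ 0, σ 1, …`. -/
def realDiag (m n : ℕ) (σ : ℕ → ℝ) : Matrix (Fin m) (Fin n) ℍ[ℝ] :=
  fun i j => if (i : ℕ) = (j : ℕ) then ((σ (i : ℕ) : ℝ) : ℍ[ℝ]) else 0

/-- Truncated real diagonal matrix keeping only the first `s` diagonal entries. -/
def realDiagTrunc (m n : ℕ) (σ : ℕ → ℝ) (s : ℕ) : Matrix (Fin m) (Fin n) ℍ[ℝ] :=
  fun i j => if (i : ℕ) = (j : ℕ) ∧ (i : ℕ) < s then ((σ (i : ℕ) : ℝ) : ℍ[ℝ]) else 0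



section AuxProofs

lemma re_sum' {α : Type*} (s : Finset α) (f : α → ℍ[ℝ]) :
    (∑ ν ∈ s, f ν).re = ∑ ν ∈ s, (f ν).re :=
  map_sum (AddMonoidHom.mk' QuaternionAlgebra.re fun _ _ => rfl) f s

lemma fiber_key {p : Type*} [Fintype p] [DecidableEq p] (Q : Matrix p p ℍ[ℝ]) (hQ : Qᴴ * Q = 1)
    (x : p → ℍ[ℝ]) :
    ∑ ν, ‖∑ μ, Q ν μ * x μ‖ ^ 2 = ∑ ν, ‖x ν‖ ^ 2 := by
  have hre : ∀ q : ℍ[ℝ], ‖q‖ ^ 2 = (star q * q).re := by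
    intro q
    rw [Quaternion.star_mul_self]
    simp [sq, Quaternion.normSq_eq_norm_mul_self]
  set v : Matrix p (Fin 1) ℍ[ℝ] := fun ν _ => x ν with hv
  have hmat : ((Q * v)ᴴ * (Q * v)) 0 0 = (vᴴ * v) 0 0 := by
    rw [conjTranspose_mul, Matrix.mul_assoc, ← Matrix.mul_assoc Qᴴ, hQ, Matrix.one_mul]
  have hL : ((Q * v)ᴴ * (Q * v)) 0 0 = ∑ ν, star ((Q * v) ν 0) * (Q * v) ν 0 := by
    simp [Matrix.mul_apply, conjTranspose_apply]
  have hR : (vᴴ * v) 0 0 = ∑ ν, star (x ν) * x ν := by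
    rw [Matrix.mul_apply]; rfl
  have hQv : ∀ ν, (Q * v) ν 0 = ∑ μ, Q ν μ * x μ := by
    intro ν; rw [Matrix.mul_apply]
  calc ∑ ν, ‖∑ μ, Q ν μ * x μ‖ ^ 2
      = (∑ ν, star ((Q * v) ν 0) * (Q * v) ν 0).re := by
        rw [re_sum']
        exact Finset.sum_congr rfl fun ν _ => by rw [hre, hQv]
    _ = (∑ ν, star (x ν) * x ν).re := by rw [← hL, hmat, hR]
    _ = ∑ ν, ‖x ν‖ ^ 2 := by
        rw [re_sum']
        exact (Finset.sum_congr rfl fun ν _ => (hre _).symm)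

lemma left_inv' {a b : Type*} [Fintype a] [DecidableEq a] [Fintype b]
    (Q : Matrix a a ℍ[ℝ]) (hQ : Qᴴ * Q = 1) (M : Matrix a b ℍ[ℝ]) :
    ∑ i, ∑ j, ‖(Q * M) i j‖ ^ 2 = ∑ i, ∑ j, ‖M i j‖ ^ 2 := by
  calc ∑ i, ∑ j, ‖(Q * M) i j‖ ^ 2
      = ∑ j, ∑ i, ‖(Q * M) i j‖ ^ 2 := Finset.sum_comm
    _ = ∑ j, ∑ i, ‖M i j‖ ^ 2 := by
        refine Finset.sum_congr rfl fun j _ => ?_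
        simpa [Matrix.mul_apply] using fiber_key Q hQ (fun k => M k j)
    _ = ∑ i, ∑ j, ‖M i j‖ ^ 2 := Finset.sum_comm

lemma right_inv' {a b : Type*} [Fintype a] [Fintype b] [DecidableEq b]
    (M : Matrix a b ℍ[ℝ]) (W : Matrix b b ℍ[ℝ]) (hW : W * Wᴴ = 1) :
    ∑ i, ∑ j, ‖(M * W) i j‖ ^ 2 = ∑ i, ∑ j, ‖M i j‖ ^ 2 := by
  refine Finset.sum_congr rfl fun i _ => ?_
  have key := fiber_key Wᴴ (by rwa [conjTranspose_conjTranspose]) (fun k => star (M i k))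
  have hentry : ∀ j, star ((M * W) i j) = ∑ k, Wᴴ j k * star (M i k) := by
    intro j
    rw [Matrix.mul_apply, star_sum]
    exact Finset.sum_congr rfl fun k _ => by rw [StarMul.star_mul, conjTranspose_apply]
  calc ∑ j, ‖(M * W) i j‖ ^ 2
      = ∑ j, ‖∑ k, Wᴴ j k * star (M i k)‖ ^ 2 := by
        refine Finset.sum_congr rfl fun j _ => ?_
        rw [← Quaternion.norm_star, hentry]
    _ = ∑ k, ‖star (M i k)‖ ^ 2 := key
    _ = ∑ k, ‖M i k‖ ^ 2 := by simp [Quaternion.norm_star]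

lemma hatT_comp' {ι : Type*} [Fintype ι] (P Q : Matrix ι ι ℍ[ℝ]) {m n : ℕ} (A : QT ι m n) :
    hatT P (hatT Q A) = hatT (P * Q) A := by
  funext ν i j
  simp only [hatT, Matrix.mul_apply, Finset.mul_sum, Finset.sum_mul, mul_assoc]
  exact Finset.sum_comm

lemma hatT_one' {ι : Type*} [Fintype ι] [DecidableEq ι] {m n : ℕ} (A : QT ι m n) :
    hatT (1 : Matrix ι ι ℍ[ℝ]) A = A := by
  funext ν i j
  simp [hatT, Matrix.one_apply]

lemma star_real_smul (c : ℝ) (q : ℍ[ℝ]) : star (c • q) = c • star q := by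
  ext <;> simp

lemma conjTranspose_real_smul {p q : Type*} (c : ℝ) (M : Matrix p q ℍ[ℝ]) :
    (c • M)ᴴ = c • Mᴴ := by
  refine Matrix.ext fun i j => ?_
  rw [conjTranspose_apply, Matrix.smul_apply, Matrix.smul_apply, conjTranspose_apply,
    star_real_smul]

lemma sum_comm3 {α β γ : Type*} [Fintype α] [Fintype β] [Fintype γ] (f : α → β → γ → ℝ) :
    ∑ a, ∑ b, ∑ g, f a b g = ∑ b, ∑ g, ∑ a, f a b g :=
  calc ∑ a, ∑ b, ∑ g, f a b g
      = ∑ b, ∑ a, ∑ g, f a b g := Finset.sum_comm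
    _ = ∑ b, ∑ g, ∑ a, f a b g := Finset.sum_congr rfl fun b _ => Finset.sum_comm

lemma diag_frob {N1 N2 : ℕ} (σ : ℕ → ℝ) :
    ∑ i : Fin N1, ∑ j : Fin N2, ‖realDiag N1 N2 σ i j‖ ^ 2
      = ∑ k ∈ Finset.range (min N1 N2), σ k ^ 2 := by
  have h1 : ∀ i : Fin N1, ∑ j : Fin N2, ‖realDiag N1 N2 σ i j‖ ^ 2
      = if (i : ℕ) < N2 then σ (i : ℕ) ^ 2 else 0 := by
    intro i
    by_cases h : (i : ℕ) < N2
    · rw [if_pos h, Finset.sum_eq_single (⟨(i : ℕ), h⟩ : Fin N2)]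
      · simp [realDiag, Quaternion.norm_coe, sq_abs]
      · intro j _ hj
        have hne : (i : ℕ) ≠ (j : ℕ) := fun he => hj (Fin.ext he.symm)
        simp [realDiag, hne]
      · simp
    · rw [if_neg h]
      apply Finset.sum_eq_zero
      intro j _
      have hne : (i : ℕ) ≠ (j : ℕ) := by
        have := j.isLt; omega
      simp [realDiag, hne]
  rw [Finset.sum_congr rfl (fun i _ => h1 i),
    Fin.sum_univ_eq_sum_range (fun k => if k < N2 then σ k ^ 2 else 0) N1,
    ← Finset.sum_filter]
  congr 1
  ext k
  simp [Nat.lt_min]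

end AuxProofs

/-- Frobenius norm identity from the TQt-SVD when `∏ |cₙ| = 1`. -/
theorem stmt14 {ι : Type*} [Fintype ι] [DecidableEq ι]
    {K : ℕ} (cs : Fin K → ℝ) (hcs : ∀ k, cs k ≠ 0)
    (U₀ : Matrix ι ι ℍ[ℝ]) (hU₀ : qUnitaryM U₀)
    (T S : Matrix ι ι ℍ[ℝ]) (hT : T = (∏ k, cs k) • U₀) (hS : S = (∏ k, cs k)⁻¹ • U₀ᴴ)
    (hc1 : (∏ k, |cs k|) = 1)
    {N1 N2 : ℕ} (A : QT ι N1 N2) (U : QT ι N1 N1) (D : QT ι N1 N2) (V : QT ι N2 N2)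
    (hU : qtUnitary T S U) (hV : qtUnitary T S V)
    (σ : ι → ℕ → ℝ) (hD : ∀ ν, hatT T D ν = realDiag N1 N2 (σ ν))
    (hσ0 : ∀ ν k, 0 ≤ σ ν k) (hσa : ∀ ν, Antitone (σ ν))
    (hA : A = qt T S U (qt T S D (qtH T S V)))
    :
    frob A ^ 2 = ∑ k ∈ Finset.range (min N1 N2), tubeNorm D k ^ 2 := by
  classical
  set c := ∏ k, cs k with hcdef
  have hcabs : |c| = 1 := by rw [hcdef, Finset.abs_prod]; exact hc1
  have hc2 : c * c = 1 := by rw [← abs_mul_abs_self c, hcabs, mul_one]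
  have hcinv : c⁻¹ = c := inv_eq_of_mul_eq_one_right hc2
  have hS' : S = c • U₀ᴴ := by rw [hS, hcinv]
  have hT' : T = c • U₀ := hT
  have hTT : Tᴴ * T = 1 := by
    rw [hT', conjTranspose_real_smul, smul_mul_assoc, mul_smul_comm, smul_smul,
      hc2, one_smul, hU₀.1]
  have hTS : T * S = 1 := by
    rw [hT', hS', smul_mul_assoc, mul_smul_comm, smul_smul, hc2, one_smul, hU₀.2]
  -- transform-domain recovery
  have hrecT : ∀ {m n : ℕ} (X : QT ι m n), hatT T (hatT S X) = X := by
    intro m n X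
    rw [hatT_comp', hTS, hatT_one']
  have hqtT : ∀ {m p n : ℕ} (B : QT ι m p) (C : QT ι p n),
      hatT T (qt T S B C) = fun ν => hatT T B ν * hatT T C ν := by
    intro m p n B C
    unfold qt
    rw [hrecT]
    rfl
  have hqtHT : ∀ {m n : ℕ} (X : QT ι m n),
      hatT T (qtH T S X) = fun ν => (hatT T X ν)ᴴ := by
    intro m n X
    exact hrecT _
  have hIdT : ∀ p : ℕ, hatT T (qtId S p) = fun _ => (1 : Matrix (Fin p) (Fin p) ℍ[ℝ]) := by
    intro p
    exact hrecT _
  -- slice unitarity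
  have hUsl : ∀ ν, (hatT T U ν)ᴴ * hatT T U ν = 1 := by
    intro ν
    have h := congrArg (hatT T) hU.1
    rw [hqtT, hqtHT, hIdT] at h
    exact congrFun h ν
  have hVsl : ∀ ν, (hatT T V ν)ᴴ * hatT T V ν = 1 := by
    intro ν
    have h := congrArg (hatT T) hV.1
    rw [hqtT, hqtHT, hIdT] at h
    exact congrFun h ν
  -- hat of A in slice form
  have hAsl : ∀ ν, hatT T A ν = hatT T U ν * (hatT T D ν * (hatT T V ν)ᴴ) := by
    intro ν
    rw [hA, congrFun (hqtT U _) ν]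
    congr 1
    rw [congrFun (hqtT D _) ν, congrFun (hqtHT V) ν]
  -- fiber norm preservation under hatT T
  have hfibT : ∀ {m n : ℕ} (X : QT ι m n) (i : Fin m) (j : Fin n),
      ∑ ν, ‖hatT T X ν i j‖ ^ 2 = ∑ ν, ‖X ν i j‖ ^ 2 := by
    intro m n X i j
    exact fiber_key T hTT (fun μ => X μ i j)
  have hfrob : frob A ^ 2 = ∑ ν, ∑ i, ∑ j, ‖A ν i j‖ ^ 2 := by
    rw [frob, Real.sq_sqrt]
    exact Finset.sum_nonneg fun ν _ => Finset.sum_nonneg fun i _ =>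
      Finset.sum_nonneg fun j _ => sq_nonneg _
  calc frob A ^ 2
      = ∑ ν, ∑ i, ∑ j, ‖A ν i j‖ ^ 2 := hfrob
    _ = ∑ i, ∑ j, ∑ ν, ‖A ν i j‖ ^ 2 := sum_comm3 _
    _ = ∑ i, ∑ j, ∑ ν, ‖hatT T A ν i j‖ ^ 2 := by
        exact Finset.sum_congr rfl fun i _ =>
          Finset.sum_congr rfl fun j _ => (hfibT A i j).symm
    _ = ∑ ν, ∑ i, ∑ j, ‖hatT T A ν i j‖ ^ 2 :=
        (sum_comm3 (fun ν i j => ‖hatT T A ν i j‖ ^ 2)).symm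
    _ = ∑ ν, ∑ i, ∑ j, ‖hatT T D ν i j‖ ^ 2 := by
        refine Finset.sum_congr rfl fun ν _ => ?_
        calc ∑ i, ∑ j, ‖hatT T A ν i j‖ ^ 2
            = ∑ i, ∑ j, ‖(hatT T U ν * (hatT T D ν * (hatT T V ν)ᴴ)) i j‖ ^ 2 := by
              rw [hAsl ν]
          _ = ∑ i, ∑ j, ‖(hatT T D ν * (hatT T V ν)ᴴ) i j‖ ^ 2 :=
              left_inv' _ (hUsl ν) _
          _ = ∑ i, ∑ j, ‖hatT T D ν i j‖ ^ 2 :=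
              right_inv' _ _ (by rw [conjTranspose_conjTranspose]; exact hVsl ν)
    _ = ∑ ν, ∑ k ∈ Finset.range (min N1 N2), σ ν k ^ 2 := by
        refine Finset.sum_congr rfl fun ν _ => ?_
        rw [show (hatT T D ν) = realDiag N1 N2 (σ ν) from hD ν]
        exact diag_frob (σ ν)
    _ = ∑ k ∈ Finset.range (min N1 N2), ∑ ν, σ ν k ^ 2 := Finset.sum_comm
    _ = ∑ k ∈ Finset.range (min N1 N2), tubeNorm D k ^ 2 := by
        refine Finset.sum_congr rfl fun k hk => ?_
        rw [Finset.mem_range, Nat.lt_min] at hk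
        have htn : tubeNorm D k ^ 2 = ∑ ν, ‖diagTube D k ν‖ ^ 2 := by
          rw [tubeNorm, Real.sq_sqrt]
          exact Finset.sum_nonneg fun ν _ => sq_nonneg _
        rw [htn]
        have hdt : ∀ ν, diagTube D k ν = D ν ⟨k, hk.1⟩ ⟨k, hk.2⟩ := by
          intro ν
          rw [diagTube, dif_pos hk]
        have hhat : ∀ ν, hatT T D ν ⟨k, hk.1⟩ ⟨k, hk.2⟩ = ((σ ν k : ℝ) : ℍ[ℝ]) := by
          intro ν
          rw [hD ν]
          simp [realDiag]
        calc ∑ ν, σ ν k ^ 2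
            = ∑ ν, ‖hatT T D ν ⟨k, hk.1⟩ ⟨k, hk.2⟩‖ ^ 2 := by
              refine Finset.sum_congr rfl fun ν _ => ?_
              rw [hhat ν, Quaternion.norm_coe, Real.norm_eq_abs, sq_abs]
          _ = ∑ ν, ‖D ν ⟨k, hk.1⟩ ⟨k, hk.2⟩‖ ^ 2 := hfibT D _ _
          _ = ∑ ν, ‖diagTube D k ν‖ ^ 2 := by
              exact Finset.sum_congr rfl fun ν _ => by rw [hdt ν]


end
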